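/- Let Y⁻, Y⁺ > 0 and let u : [−Y⁻, Y⁺] × S¹ → ℝⁿ be smooth, with Hopf function φ = |∂_s u|² − |∂_θ u|² − 2i ⟨∂_s u, ∂_θ u⟩. Then: (i) pointwise, ∂̄φ := ½(∂_s + i∂_θ)φ = ⟨∂_s u − i ∂_θ u, Δ_{g₀} u⟩, where Δ_{g₀} u = ∂_s² u + ∂_θ² u and the pairing is the complex-bilinear extension of the Euclidean inner product; (ii) consequently ∫∫ |∂̄φ| dθ ds ≤ 2 E(u)^{1/2} ( ∫∫ |Δ_{g₀} u|² dθ ds )^{1/2}, where E(u) = ½∫∫(|∂_s u|² + |∂_θ u|²) dθ ds; and (iii) if [−Y⁻, Y⁺] × S¹ carries a hyperbolic cylinder metric g = ρ_ℓ(s)²(ds² + dθ²) as below, then ∫∫ |∂̄φ| dθ ds ≤ C E(u)^{1/2} ‖Δ_g u‖ for a constant C depending only on ℓ₀, c₁, c₂. -/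

import Mathlib

open MeasureTheory Filter Topology

noncomputable section

/-- The conformal factor `ρ_ℓ(s) = (ℓ/2π) cos(ℓs/2π)⁻¹` of the hyperbolic cylinder. -/
def rho (ℓ s : ℝ) : ℝ := (ℓ / (2 * Real.pi)) / Real.cos (ℓ * s / (2 * Real.pi))

/-- Partial derivative in the first (`s`) variable. -/
def pdS {E : Type*} [NormedAddCommGroup E] [NormedSpace ℝ E] (u : ℝ × ℝ → E) (q : ℝ × ℝ) : E :=
  fderiv ℝ u q (1, 0)

/-- Partial derivative in the second (`θ`) variable. -/
def pdT {E : Type*} [NormedAddCommGroup E] [NormedSpace ℝ E] (u : ℝ × ℝ → E) (q : ℝ × ℝ) : E :=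
  fderiv ℝ u q (0, 1)

/-- The flat Laplacian `Δ_{g₀} u = ∂_s² u + ∂_θ² u`. -/
def lapl {E : Type*} [NormedAddCommGroup E] [NormedSpace ℝ E] (u : ℝ × ℝ → E) (q : ℝ × ℝ) : E :=
  pdS (pdS u) q + pdT (pdT u) q

/-- A fundamental domain for the cylinder `[-Y⁻, Y⁺] × S¹`. -/
def cylSet (Ym Yp : ℝ) : Set (ℝ × ℝ) := Set.Icc (-Ym) Yp ×ˢ Set.Icc 0 (2 * Real.pi)

/-- `2π`-periodicity in the angular variable. -/
def Periodic2 {E : Type*} (u : ℝ × ℝ → E) : Prop := ∀ s θ : ℝ, u (s, θ + 2 * Real.pi) = u (s, θ)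

/-- The Dirichlet energy `E(u) = ½ ∫∫ (|∂_s u|² + |∂_θ u|²) dθ ds`. -/
def dirEnergy {n : ℕ} (Ym Yp : ℝ) (u : ℝ × ℝ → EuclideanSpace ℝ (Fin n)) : ℝ :=
  (1 / 2) * ∫ q in cylSet Ym Yp, (‖pdS u q‖ ^ 2 + ‖pdT u q‖ ^ 2)

/-- The `L²(C,g)`-norm `‖Δ_g u‖` of the tension field. -/
def tensionN {n : ℕ} (ℓ Ym Yp : ℝ) (u : ℝ × ℝ → EuclideanSpace ℝ (Fin n)) : ℝ :=
  Real.sqrt (∫ q in cylSet Ym Yp, ((rho ℓ q.1) ^ 2)⁻¹ * ‖lapl u q‖ ^ 2)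

/-- The norm `‖P^H(Re Φ)‖` of the horizontal projection of the Hopf differential. -/
def horN {n : ℕ} (ℓ Ym Yp : ℝ) (u : ℝ × ℝ → EuclideanSpace ℝ (Fin n)) : ℝ :=
  2 * (Real.sqrt (4 * Real.pi * ∫ s in Set.Icc (-Ym) Yp, ((rho ℓ s) ^ 2)⁻¹))⁻¹ *
    |∫ q in cylSet Ym Yp, (‖pdS u q‖ ^ 2 - ‖pdT u q‖ ^ 2) * ((rho ℓ q.1) ^ 2)⁻¹|

/-- The mean value `M_u(s) = (2π)⁻¹ ∫₀^{2π} u(s,θ) dθ`. -/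
def meanVal {n : ℕ} (u : ℝ × ℝ → EuclideanSpace ℝ (Fin n)) (s : ℝ) : EuclideanSpace ℝ (Fin n) :=
  (2 * Real.pi)⁻¹ • ∫ θ in (0:ℝ)..(2 * Real.pi), u (s, θ)

end

noncomputable section

/-- The Hopf function `φ(u) = |∂_s u|² − |∂_θ u|² − 2i⟨∂_s u, ∂_θ u⟩`. -/
def hopfFn {n : ℕ} (u : ℝ × ℝ → EuclideanSpace ℝ (Fin n)) (q : ℝ × ℝ) : ℂ :=
  ((‖pdS u q‖ ^ 2 - ‖pdT u q‖ ^ 2 : ℝ) : ℂ) -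
    2 * Complex.I * ((inner ℝ (pdS u q) (pdT u q) : ℝ) : ℂ)

/-- The anti-holomorphic derivative `∂̄f = ½(∂_s + i∂_θ)f` of a complex valued function on
the cylinder (`z = s + iθ`). -/
def dbarC (f : ℝ × ℝ → ℂ) (q : ℝ × ℝ) : ℂ :=
  (fderiv ℝ f q (1, 0) + Complex.I * fderiv ℝ f q (0, 1)) / 2

end

open scoped RealInnerProductSpace ContDiff

section Aux
variable {n : ℕ}

lemma contDiff_pdS' {E : Type*} [NormedAddCommGroup E] [NormedSpace ℝ E] {u : ℝ × ℝ → E}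
    (hu : ContDiff ℝ ∞ u) : ContDiff ℝ ∞ (pdS u) :=
  ((contDiff_infty_iff_fderiv.mp hu).2).clm_apply contDiff_const

lemma contDiff_pdT' {E : Type*} [NormedAddCommGroup E] [NormedSpace ℝ E] {u : ℝ × ℝ → E}
    (hu : ContDiff ℝ ∞ u) : ContDiff ℝ ∞ (pdT u) :=
  ((contDiff_infty_iff_fderiv.mp hu).2).clm_apply contDiff_const

lemma cont_lapl' {E : Type*} [NormedAddCommGroup E] [NormedSpace ℝ E] {u : ℝ × ℝ → E}
    (hu : ContDiff ℝ ∞ u) : Continuous (lapl u) :=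
  ((contDiff_pdS' (contDiff_pdS' hu)).continuous).add
    ((contDiff_pdT' (contDiff_pdT' hu)).continuous)

lemma isCompact_cylSet' (Ym Yp : ℝ) : IsCompact (cylSet Ym Yp) :=
  isCompact_Icc.prod isCompact_Icc

lemma measurableSet_cylSet' (Ym Yp : ℝ) : MeasurableSet (cylSet Ym Yp) :=
  measurableSet_Icc.prod measurableSet_Icc

lemma cont_inv_rho_sq' (ℓ : ℝ) : Continuous (fun s : ℝ => ((rho ℓ s) ^ 2)⁻¹) := by
  have : (fun s : ℝ => ((rho ℓ s) ^ 2)⁻¹) =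
      fun s => (Real.cos (ℓ * s / (2 * Real.pi))) ^ 2 / (ℓ / (2 * Real.pi)) ^ 2 := by
    funext s
    rw [rho, div_pow, inv_div]
  rw [this]
  fun_prop

lemma rho_le' {ℓ c₁ cm cp Ym Yp s : ℝ} (hℓ : 0 < ℓ) (hc₁ : 0 < c₁)
    (hcm : c₁ ≤ cm) (hcp : c₁ ≤ cp)
    (hYm : Ym = 2 * Real.pi / ℓ * (Real.pi / 2 - cm * ℓ))
    (hYp : Yp = 2 * Real.pi / ℓ * (Real.pi / 2 - cp * ℓ))
    (hYm1 : 1 ≤ Ym) (hYp1 : 1 ≤ Yp) (hs : s ∈ Set.Icc (-Ym) Yp) :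
    0 < rho ℓ s ∧ rho ℓ s ≤ 1 / (4 * c₁) := by
  have hπ := Real.pi_pos
  set t := ℓ * s / (2 * Real.pi) with ht
  have hml : cm * ℓ < Real.pi / 2 := by
    by_contra h
    push_neg at h
    have : Ym ≤ 0 := by
      rw [hYm]
      have h1 : Real.pi / 2 - cm * ℓ ≤ 0 := by linarith
      have h2 : 0 < 2 * Real.pi / ℓ := by positivity
      nlinarith
    linarith
  have hpl : cp * ℓ < Real.pi / 2 := by
    by_contra h
    push_neg at h
    have : Yp ≤ 0 := by
      rw [hYp]
      have h1 : Real.pi / 2 - cp * ℓ ≤ 0 := by linarith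
      have h2 : 0 < 2 * Real.pi / ℓ := by positivity
      nlinarith
    linarith
  have hc1l : 0 < c₁ * ℓ := by positivity
  have hcl : c₁ * ℓ < Real.pi / 2 := lt_of_le_of_lt (by nlinarith) hml
  have htub : t ≤ Real.pi / 2 - c₁ * ℓ := by
    have h1 : s ≤ Yp := hs.2
    have : t ≤ Real.pi / 2 - cp * ℓ := by
      rw [ht, hYp] at *
      rw [div_le_iff₀ (by positivity)]
      calc ℓ * s ≤ ℓ * (2 * Real.pi / ℓ * (Real.pi / 2 - cp * ℓ)) := by
            exact mul_le_mul_of_nonneg_left h1 hℓ.le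
        _ = (Real.pi / 2 - cp * ℓ) * (2 * Real.pi) := by field_simp
    nlinarith
  have htlb : -(Real.pi / 2 - c₁ * ℓ) ≤ t := by
    have h1 : -Ym ≤ s := hs.1
    have : -(Real.pi / 2 - cm * ℓ) ≤ t := by
      rw [ht, hYm] at *
      rw [le_div_iff₀ (by positivity)]
      calc -(Real.pi / 2 - cm * ℓ) * (2 * Real.pi)
          = ℓ * (-(2 * Real.pi / ℓ * (Real.pi / 2 - cm * ℓ))) := by field_simp
        _ ≤ ℓ * s := mul_le_mul_of_nonneg_left h1 hℓ.le
    nlinarith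
  have habs : |t| ≤ Real.pi / 2 - c₁ * ℓ := abs_le.mpr ⟨htlb, htub⟩
  have hcos : Real.sin (c₁ * ℓ) ≤ Real.cos t := by
    rw [← Real.cos_abs t, ← Real.cos_pi_div_two_sub (c₁ * ℓ)]
    exact Real.cos_le_cos_of_nonneg_of_le_pi (abs_nonneg t) (by linarith) habs
  have hsin : 2 / Real.pi * (c₁ * ℓ) ≤ Real.sin (c₁ * ℓ) :=
    Real.mul_le_sin (by positivity) (le_of_lt hcl)
  have hcospos : 0 < Real.cos t := lt_of_lt_of_le (by positivity) (le_trans hsin hcos)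
  constructor
  · rw [rho]
    positivity
  · rw [rho]
    have h2 : 0 < 2 / Real.pi * (c₁ * ℓ) := by positivity
    calc ℓ / (2 * Real.pi) / Real.cos t
        ≤ ℓ / (2 * Real.pi) / (2 / Real.pi * (c₁ * ℓ)) := by
          apply div_le_div_of_nonneg_left (by positivity) h2 (le_trans hsin hcos)
      _ = 1 / (4 * c₁) := by field_simp; ring

lemma cs_integral' {S : Set (ℝ × ℝ)} (hSc : IsCompact S) {F G : ℝ × ℝ → ℝ}
    (hF : Continuous F) (hG : Continuous G) (hF0 : ∀ q, 0 ≤ F q) (hG0 : ∀ q, 0 ≤ G q) :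
    (∫ q in S, F q * G q) ≤ Real.sqrt (∫ q in S, F q ^ 2) * Real.sqrt (∫ q in S, G q ^ 2) := by
  have hpq : Real.HolderConjugate 2 2 := Real.holderConjugate_iff.mpr ⟨one_lt_two, by norm_num⟩
  have h2 : ENNReal.ofReal (2:ℝ) = 2 := by norm_num
  have memF : MemLp F (ENNReal.ofReal (2:ℝ)) (volume.restrict S) := by
    rw [h2]
    refine (memLp_two_iff_integrable_sq hF.aestronglyMeasurable).mpr ?_
    exact (hF.pow 2).continuousOn.integrableOn_compact hSc
  have memG : MemLp G (ENNReal.ofReal (2:ℝ)) (volume.restrict S) := by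
    rw [h2]
    refine (memLp_two_iff_integrable_sq hG.aestronglyMeasurable).mpr ?_
    exact (hG.pow 2).continuousOn.integrableOn_compact hSc
  have key := integral_mul_le_Lp_mul_Lq_of_nonneg hpq
    (Filter.Eventually.of_forall hF0) (Filter.Eventually.of_forall hG0) memF memG
  have hrw : ∀ H : ℝ × ℝ → ℝ, (∫ q in S, H q ^ (2:ℝ)) = ∫ q in S, H q ^ 2 := by
    intro H
    refine integral_congr_ae (Filter.Eventually.of_forall fun q => ?_)
    show H q ^ (2:ℝ) = H q ^ (2:ℕ)
    rw [show (2:ℝ) = ((2:ℕ):ℝ) by norm_num, Real.rpow_natCast]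
  rw [hrw, hrw] at key
  calc (∫ q in S, F q * G q)
      ≤ (∫ q in S, F q ^ 2) ^ ((1:ℝ)/2) * (∫ q in S, G q ^ 2) ^ ((1:ℝ)/2) := key
    _ = _ := by rw [← Real.sqrt_eq_rpow, ← Real.sqrt_eq_rpow]

lemma dbar_hopf (u : ℝ × ℝ → EuclideanSpace ℝ (Fin n))
    (hu : ContDiff ℝ (⊤ : ℕ∞) u) (q : ℝ × ℝ) :
    dbarC (hopfFn u) q =
      ((inner ℝ (pdS u q) (lapl u q) : ℝ) : ℂ) -
        Complex.I * ((inner ℝ (pdT u q) (lapl u q) : ℝ) : ℂ) := by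
  have hu' : ContDiff ℝ ∞ u := hu
  obtain ⟨hud, hu2⟩ := contDiff_infty_iff_fderiv.mp hu'
  have hu1 : ∀ p, HasFDerivAt u (fderiv ℝ u p) p := fun p => (hud p).hasFDerivAt
  have hf'' : ∀ p, HasFDerivAt (fderiv ℝ u) (fderiv ℝ (fderiv ℝ u) p) p := fun p =>
    ((contDiff_infty_iff_fderiv.mp hu2).1 p).hasFDerivAt
  set f'' := fderiv ℝ (fderiv ℝ u) q with hf''def
  have symm : ∀ v w, f'' v w = f'' w v :=
    second_derivative_symmetric hu1 (hf'' q)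
  have hA : HasFDerivAt (pdS u) ((ContinuousLinearMap.apply ℝ (EuclideanSpace ℝ (Fin n)) (((1:ℝ), (0:ℝ)) : ℝ × ℝ)).comp f'') q := (ContinuousLinearMap.apply ℝ (EuclideanSpace ℝ (Fin n)) (((1:ℝ), (0:ℝ)) : ℝ × ℝ)).hasFDerivAt.comp q (hf'' q)
  have hB : HasFDerivAt (pdT u) ((ContinuousLinearMap.apply ℝ (EuclideanSpace ℝ (Fin n)) (((0:ℝ), (1:ℝ)) : ℝ × ℝ)).comp f'') q := (ContinuousLinearMap.apply ℝ (EuclideanSpace ℝ (Fin n)) (((0:ℝ), (1:ℝ)) : ℝ × ℝ)).hasFDerivAt.comp q (hf'' q)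
  have hAA := (hA.inner ℝ hA)
  have hBB := (hB.inner ℝ hB)
  have hAB := (hA.inner ℝ hB)
  have hRe : HasFDerivAt (fun p => ((⟪pdS u p, pdS u p⟫ - ⟪pdT u p, pdT u p⟫ : ℝ) : ℂ))
      (Complex.ofRealCLM.comp ((fderivInnerCLM ℝ (pdS u q, pdS u q)).comp
          (((ContinuousLinearMap.apply ℝ (EuclideanSpace ℝ (Fin n)) (((1:ℝ), (0:ℝ)) : ℝ × ℝ)).comp f'').prod ((ContinuousLinearMap.apply ℝ (EuclideanSpace ℝ (Fin n)) (((1:ℝ), (0:ℝ)) : ℝ × ℝ)).comp f'')) -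
        (fderivInnerCLM ℝ (pdT u q, pdT u q)).comp (((ContinuousLinearMap.apply ℝ (EuclideanSpace ℝ (Fin n)) (((0:ℝ), (1:ℝ)) : ℝ × ℝ)).comp f'').prod ((ContinuousLinearMap.apply ℝ (EuclideanSpace ℝ (Fin n)) (((0:ℝ), (1:ℝ)) : ℝ × ℝ)).comp f'')))) q :=
    Complex.ofRealCLM.hasFDerivAt.comp q (hAA.sub hBB)
  have hIm : HasFDerivAt (fun p => (2 * Complex.I) * ((⟪pdS u p, pdT u p⟫ : ℝ) : ℂ))
      ((2 * Complex.I) • (Complex.ofRealCLM.comp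
        ((fderivInnerCLM ℝ (pdS u q, pdT u q)).comp (((ContinuousLinearMap.apply ℝ (EuclideanSpace ℝ (Fin n)) (((1:ℝ), (0:ℝ)) : ℝ × ℝ)).comp f'').prod ((ContinuousLinearMap.apply ℝ (EuclideanSpace ℝ (Fin n)) (((0:ℝ), (1:ℝ)) : ℝ × ℝ)).comp f''))))) q :=
    (Complex.ofRealCLM.hasFDerivAt.comp q hAB).const_mul _
  have hΦ := hRe.sub hIm
  have hhopf : hopfFn u = fun p => ((⟪pdS u p, pdS u p⟫ - ⟪pdT u p, pdT u p⟫ : ℝ) : ℂ) -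
      (2 * Complex.I) * ((⟪pdS u p, pdT u p⟫ : ℝ) : ℂ) := by
    funext p
    simp only [hopfFn, real_inner_self_eq_norm_sq]
  have hD := HasFDerivAt.fderiv (f := fun p => ((⟪pdS u p, pdS u p⟫ - ⟪pdT u p, pdT u p⟫ : ℝ) : ℂ) -
      (2 * Complex.I) * ((⟪pdS u p, pdT u p⟫ : ℝ) : ℂ)) hΦ
  have ha : pdS (pdS u) q = f'' (1,0) (1,0) := by
    show fderiv ℝ (pdS u) q (1,0) = _
    rw [hA.fderiv]; rfl
  have hc : pdT (pdT u) q = f'' (0,1) (0,1) := by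
    show fderiv ℝ (pdT u) q (0,1) = _
    rw [hB.fderiv]; rfl
  rw [dbarC, hhopf, hD]
  simp only [ContinuousLinearMap.coe_sub', Pi.sub_apply, ContinuousLinearMap.coe_comp',
    Function.comp_apply, ContinuousLinearMap.smul_apply, ContinuousLinearMap.prod_apply,
    fderivInnerCLM_apply, Complex.ofRealCLM_apply, ContinuousLinearMap.apply_apply,
    lapl, ha, hc]
  have hsymm := symm (1,0) (0,1)
  set A := pdS u q
  set B := pdT u q
  set a := f'' (1,0) (1,0)
  set b := f'' (1,0) (0,1)
  set c := f'' (0,1) (0,1)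
  rw [show f'' (0,1) (1,0) = b from (symm (0,1) (1,0)).trans rfl]
  simp only [inner_add_right]
  rw [real_inner_comm a A, real_inner_comm b A, real_inner_comm b B, real_inner_comm a B,
    real_inner_comm c B]
  simp only [smul_eq_mul]
  push_cast
  linear_combination (-((inner ℝ b B : ℝ) : ℂ) - ((inner ℝ A c : ℝ) : ℂ)) * Complex.I_mul_I

lemma dbar_bound (u : ℝ × ℝ → EuclideanSpace ℝ (Fin n))
    (hu : ContDiff ℝ (⊤ : ℕ∞) u) (q : ℝ × ℝ) :
    ‖dbarC (hopfFn u) q‖ ≤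
      Real.sqrt (‖pdS u q‖ ^ 2 + ‖pdT u q‖ ^ 2) * ‖lapl u q‖ := by
  rw [dbar_hopf u hu q]
  set x : ℝ := ⟪pdS u q, lapl u q⟫ with hx
  set y : ℝ := ⟪pdT u q, lapl u q⟫ with hy
  have hz : ‖((x:ℂ) - Complex.I * (y:ℂ))‖ = Real.sqrt (x ^ 2 + y ^ 2) := by
    rw [Complex.norm_def, Complex.normSq_apply]
    simp only [Complex.sub_re, Complex.sub_im, Complex.ofReal_re, Complex.ofReal_im,
      Complex.mul_re, Complex.mul_im, Complex.I_re, Complex.I_im]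
    ring_nf
  rw [hz]
  have hx2 : x ^ 2 ≤ (‖pdS u q‖ * ‖lapl u q‖) ^ 2 := by
    rw [← sq_abs]
    exact pow_le_pow_left₀ (abs_nonneg x) (abs_real_inner_le_norm _ _) 2
  have hy2 : y ^ 2 ≤ (‖pdT u q‖ * ‖lapl u q‖) ^ 2 := by
    rw [← sq_abs]
    exact pow_le_pow_left₀ (abs_nonneg y) (abs_real_inner_le_norm _ _) 2
  calc Real.sqrt (x ^ 2 + y ^ 2)
      ≤ Real.sqrt ((‖pdS u q‖ ^ 2 + ‖pdT u q‖ ^ 2) * ‖lapl u q‖ ^ 2) := by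
        apply Real.sqrt_le_sqrt
        nlinarith
    _ = _ := by
        rw [Real.sqrt_mul (by positivity), Real.sqrt_sq (norm_nonneg _)]

lemma part2 (Ym Yp : ℝ) (u : ℝ × ℝ → EuclideanSpace ℝ (Fin n))
    (hu : ContDiff ℝ (⊤ : ℕ∞) u) :
    (∫ q in cylSet Ym Yp, ‖dbarC (hopfFn u) q‖) ≤
      2 * Real.sqrt (dirEnergy Ym Yp u) *
        Real.sqrt (∫ q in cylSet Ym Yp, ‖lapl u q‖ ^ 2) := by
  have hu' : ContDiff ℝ ∞ u := hu
  set S := cylSet Ym Yp with hS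
  have hSc : IsCompact S := isCompact_cylSet' Ym Yp
  have hSm : MeasurableSet S := measurableSet_cylSet' Ym Yp
  set F : ℝ × ℝ → ℝ := fun q => Real.sqrt (‖pdS u q‖ ^ 2 + ‖pdT u q‖ ^ 2) with hF
  set G : ℝ × ℝ → ℝ := fun q => ‖lapl u q‖ with hG
  have contA : Continuous (pdS u) := (contDiff_pdS' hu').continuous
  have contB : Continuous (pdT u) := (contDiff_pdT' hu').continuous
  have contL : Continuous (lapl u) := cont_lapl' hu'
  have contF : Continuous F :=
    Real.continuous_sqrt.comp ((contA.norm.pow 2).add (contB.norm.pow 2))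
  have contG : Continuous G := contL.norm
  have hfe : (fun q => ‖dbarC (hopfFn u) q‖) = fun q =>
      ‖((⟪pdS u q, lapl u q⟫ : ℝ) : ℂ) - Complex.I * ((⟪pdT u q, lapl u q⟫ : ℝ) : ℂ)‖ :=
    funext fun q => by rw [dbar_hopf u hu q]
  have contD : Continuous (fun q => ‖dbarC (hopfFn u) q‖) := by
    rw [hfe]
    exact ((Complex.continuous_ofReal.comp (contA.inner contL)).sub
      (continuous_const.mul (Complex.continuous_ofReal.comp (contB.inner contL)))).norm
  have h1 : (∫ q in S, ‖dbarC (hopfFn u) q‖) ≤ ∫ q in S, F q * G q := by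
    refine setIntegral_mono_on (contD.continuousOn.integrableOn_compact hSc)
      ((contF.mul contG).continuousOn.integrableOn_compact hSc) hSm ?_
    exact fun q _ => dbar_bound u hu q
  have h2 := cs_integral' hSc contF contG (fun q => Real.sqrt_nonneg _) (fun q => norm_nonneg _)
  have h3 : (∫ q in S, F q ^ 2) = 2 * dirEnergy Ym Yp u := by
    rw [dirEnergy]
    have : (∫ q in S, F q ^ 2) = ∫ q in S, (‖pdS u q‖ ^ 2 + ‖pdT u q‖ ^ 2) := by
      refine integral_congr_ae (Filter.Eventually.of_forall fun q => ?_)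
      show F q ^ 2 = _
      rw [hF, Real.sq_sqrt (by positivity)]
    rw [this]
    ring
  have hE : 0 ≤ dirEnergy Ym Yp u := by
    rw [dirEnergy]
    have : 0 ≤ ∫ q in S, (‖pdS u q‖ ^ 2 + ‖pdT u q‖ ^ 2) :=
      integral_nonneg fun q => by positivity
    linarith
  have h4 : Real.sqrt (∫ q in S, F q ^ 2) ≤ 2 * Real.sqrt (dirEnergy Ym Yp u) := by
    rw [h3, Real.sqrt_mul (by norm_num)]
    have hs2 : Real.sqrt 2 ≤ 2 := by
      nlinarith [Real.sq_sqrt (show (0:ℝ) ≤ 2 by norm_num), Real.sqrt_nonneg 2]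
    exact mul_le_mul_of_nonneg_right hs2 (Real.sqrt_nonneg _)
  calc (∫ q in S, ‖dbarC (hopfFn u) q‖)
      ≤ ∫ q in S, F q * G q := h1
    _ ≤ Real.sqrt (∫ q in S, F q ^ 2) * Real.sqrt (∫ q in S, G q ^ 2) := h2
    _ ≤ 2 * Real.sqrt (dirEnergy Ym Yp u) * Real.sqrt (∫ q in S, G q ^ 2) :=
        mul_le_mul_of_nonneg_right h4 (Real.sqrt_nonneg _)
    _ = _ := by rw [hG]

end Aux

lemma tension_cmp {n : ℕ} {ℓ c₁ cm cp Ym Yp : ℝ} (u : ℝ × ℝ → EuclideanSpace ℝ (Fin n))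
    (hu : ContDiff ℝ (⊤ : ℕ∞) u)
    (hℓ : 0 < ℓ) (hc₁ : 0 < c₁) (hcm : c₁ ≤ cm) (hcp : c₁ ≤ cp)
    (hYmE : Ym = 2 * Real.pi / ℓ * (Real.pi / 2 - cm * ℓ))
    (hYpE : Yp = 2 * Real.pi / ℓ * (Real.pi / 2 - cp * ℓ))
    (hYm1 : 1 ≤ Ym) (hYp1 : 1 ≤ Yp) :
    Real.sqrt (∫ q in cylSet Ym Yp, ‖lapl u q‖ ^ 2) ≤
      (1 / (4 * c₁)) * tensionN ℓ Ym Yp u := by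
  have hu' : ContDiff ℝ ∞ u := hu
  set S := cylSet Ym Yp with hSdef
  set M : ℝ := 1 / (4 * c₁) with hM
  have hM0 : 0 < M := by positivity
  have contL : Continuous (lapl u) := cont_lapl' hu'
  have int2 : IntegrableOn (fun q : ℝ × ℝ =>
      M ^ 2 * (((rho ℓ q.1) ^ 2)⁻¹ * ‖lapl u q‖ ^ 2)) S :=
    (continuous_const.mul (((cont_inv_rho_sq' ℓ).comp continuous_fst).mul
      (contL.norm.pow 2))).continuousOn.integrableOn_compact (isCompact_cylSet' Ym Yp)
  have h1 : (∫ q in S, ‖lapl u q‖ ^ 2) ≤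
      ∫ q in S, M ^ 2 * (((rho ℓ q.1) ^ 2)⁻¹ * ‖lapl u q‖ ^ 2) := by
    refine setIntegral_mono_on
      ((contL.norm.pow 2).continuousOn.integrableOn_compact (isCompact_cylSet' Ym Yp))
      int2 (measurableSet_cylSet' Ym Yp) ?_
    intro q hq
    obtain ⟨hρ0, hρM⟩ := rho_le' hℓ hc₁ hcm hcp hYmE hYpE hYm1 hYp1 hq.1
    have hρ2 : rho ℓ q.1 ^ 2 ≤ M ^ 2 := by nlinarith
    have key : (1:ℝ) ≤ M ^ 2 * ((rho ℓ q.1) ^ 2)⁻¹ := by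
      rw [← div_eq_mul_inv, le_div_iff₀ (by positivity), one_mul]
      exact hρ2
    calc ‖lapl u q‖ ^ 2 = 1 * ‖lapl u q‖ ^ 2 := (one_mul _).symm
      _ ≤ (M ^ 2 * ((rho ℓ q.1) ^ 2)⁻¹) * ‖lapl u q‖ ^ 2 :=
          mul_le_mul_of_nonneg_right key (by positivity)
      _ = M ^ 2 * (((rho ℓ q.1) ^ 2)⁻¹ * ‖lapl u q‖ ^ 2) := by ring
  have h2 : (∫ q in S, M ^ 2 * (((rho ℓ q.1) ^ 2)⁻¹ * ‖lapl u q‖ ^ 2)) =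
      M ^ 2 * ∫ q in S, ((rho ℓ q.1) ^ 2)⁻¹ * ‖lapl u q‖ ^ 2 :=
    integral_const_mul _ _
  rw [tensionN]
  calc Real.sqrt (∫ q in S, ‖lapl u q‖ ^ 2)
      ≤ Real.sqrt (M ^ 2 * ∫ q in S, ((rho ℓ q.1) ^ 2)⁻¹ * ‖lapl u q‖ ^ 2) :=
        Real.sqrt_le_sqrt (h2 ▸ h1)
    _ = M * Real.sqrt (∫ q in S, ((rho ℓ q.1) ^ 2)⁻¹ * ‖lapl u q‖ ^ 2) := by
        rw [Real.sqrt_mul (by positivity), Real.sqrt_sq hM0.le]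


/-- the anti-holomorphic derivative of the Hopf function is
`∂̄φ = ⟨∂_s u − i∂_θ u, Δ_{g₀}u⟩`, with the resulting `L¹`-bounds in terms of the energy and
the (flat, resp. hyperbolic) `L²`-norm of the tension field. -/
theorem stmt17 (ℓ₀ c₁ c₂ : ℝ) (hℓ₀ : 0 < ℓ₀) (hc₁ : 0 < c₁) (hc₂ : 0 < c₂) :
    ∃ C > (0:ℝ),
      ∀ (n : ℕ) (Ym Yp : ℝ) (u : ℝ × ℝ → EuclideanSpace ℝ (Fin n)),
        0 < Ym → 0 < Yp →
        ContDiff ℝ (⊤ : ℕ∞) u → Periodic2 u →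
        (∀ q : ℝ × ℝ, dbarC (hopfFn u) q =
            ((inner ℝ (pdS u q) (lapl u q) : ℝ) : ℂ) -
              Complex.I * ((inner ℝ (pdT u q) (lapl u q) : ℝ) : ℂ)) ∧
        ((∫ q in cylSet Ym Yp, ‖dbarC (hopfFn u) q‖) ≤
          2 * Real.sqrt (dirEnergy Ym Yp u) *
            Real.sqrt (∫ q in cylSet Ym Yp, ‖lapl u q‖ ^ 2)) ∧
        ∀ ℓ cm cp : ℝ, 0 < ℓ → ℓ < ℓ₀ →
          cm ∈ Set.Icc c₁ c₂ → cp ∈ Set.Icc c₁ c₂ →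
          Ym = 2 * Real.pi / ℓ * (Real.pi / 2 - cm * ℓ) →
          Yp = 2 * Real.pi / ℓ * (Real.pi / 2 - cp * ℓ) →
          1 ≤ Ym → 1 ≤ Yp →
          (∫ q in cylSet Ym Yp, ‖dbarC (hopfFn u) q‖) ≤
            C * Real.sqrt (dirEnergy Ym Yp u) * tensionN ℓ Ym Yp u := by
  refine ⟨2 + 1 / (2 * c₁), by positivity, ?_⟩
  intro n Ym Yp u hYm0 hYp0 hu hper
  refine ⟨dbar_hopf u hu, part2 Ym Yp u hu, ?_⟩
  intro ℓ cm cp hℓ hℓℓ₀ hcm hcp hYmE hYpE hYm1 hYp1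
  have h2 := part2 Ym Yp u hu
  have h3 := tension_cmp u hu hℓ hc₁ hcm.1 hcp.1 hYmE hYpE hYm1 hYp1
  have hT0 : 0 ≤ tensionN ℓ Ym Yp u := Real.sqrt_nonneg _
  have hE0 : 0 ≤ Real.sqrt (dirEnergy Ym Yp u) := Real.sqrt_nonneg _
  calc (∫ q in cylSet Ym Yp, ‖dbarC (hopfFn u) q‖)
      ≤ 2 * Real.sqrt (dirEnergy Ym Yp u) *
          Real.sqrt (∫ q in cylSet Ym Yp, ‖lapl u q‖ ^ 2) := h2
    _ ≤ 2 * Real.sqrt (dirEnergy Ym Yp u) * ((1 / (4 * c₁)) * tensionN ℓ Ym Yp u) :=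
        mul_le_mul_of_nonneg_left h3 (by positivity)
    _ ≤ (2 + 1 / (2 * c₁)) * Real.sqrt (dirEnergy Ym Yp u) * tensionN ℓ Ym Yp u := by
        have hET : 0 ≤ Real.sqrt (dirEnergy Ym Yp u) * tensionN ℓ Ym Yp u :=
          mul_nonneg hE0 hT0
        have key : 2 * Real.sqrt (dirEnergy Ym Yp u) * ((1 / (4 * c₁)) * tensionN ℓ Ym Yp u)
            = (1 / (2 * c₁)) * (Real.sqrt (dirEnergy Ym Yp u) * tensionN ℓ Ym Yp u) := by
          field_simp
          ring
        rw [key]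
        have hc : (0:ℝ) < 1 / (2 * c₁) := by positivity
        nlinarith [hET]
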